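/- Let G : (0,1) → ℝ be nonnegative and integrable, x ∈ (0,1), α, β > -1. Define V(A) = ∫₀¹ G(t) x^α t^{-1} (log(1/x) + A·log(1/t))^{-(β+1)} dt for A > 0 (assuming convergence for all A > 0). Then V is log-convex on (0,∞), and consequently V(A)·V(A+2) ≥ V(A+1)² for all A > 0. -/

import Mathlib

open MeasureTheory Real Set

lemma holder_aux {F1 F2 Fm : ℝ → ℝ} {s : Set ℝ} (hs : MeasurableSet s) {l : ℝ}
    (hl : 0 < l) (hl1 : l < 1)
    (h1 : IntegrableOn F1 s) (h2 : IntegrableOn F2 s) (hm : IntegrableOn Fm s)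
    (h1n : ∀ t ∈ s, 0 ≤ F1 t) (h2n : ∀ t ∈ s, 0 ≤ F2 t) (hmn : ∀ t ∈ s, 0 ≤ Fm t)
    (hpt : ∀ t ∈ s, Fm t ≤ F1 t ^ l * F2 t ^ (1 - l)) :
    ∫ t in s, Fm t ≤ (∫ t in s, F1 t) ^ l * (∫ t in s, F2 t) ^ (1 - l) := by
  have h1nn : 0 ≤ᵐ[volume.restrict s] F1 := (ae_restrict_iff' hs).2 (ae_of_all _ h1n)
  have h2nn : 0 ≤ᵐ[volume.restrict s] F2 := (ae_restrict_iff' hs).2 (ae_of_all _ h2n)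
  have hmnn : 0 ≤ᵐ[volume.restrict s] Fm := (ae_restrict_iff' hs).2 (ae_of_all _ hmn)
  have I1 : 0 ≤ ∫ t in s, F1 t := integral_nonneg_of_ae h1nn
  have I2 : 0 ≤ ∫ t in s, F2 t := integral_nonneg_of_ae h2nn
  rw [← ENNReal.ofReal_le_ofReal_iff (by positivity)]
  rw [ofReal_integral_eq_lintegral_ofReal hm hmnn]
  have e1 := ofReal_integral_eq_lintegral_ofReal h1 h1nn
  have e2 := ofReal_integral_eq_lintegral_ofReal h2 h2nn
  have hconj : Real.HolderConjugate (1 / l) (1 / (1 - l)) :=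
    Real.holderConjugate_one_div hl (by linarith) (by ring)
  have m1 : AEMeasurable (fun t => (ENNReal.ofReal (F1 t)) ^ l) (volume.restrict s) :=
    (h1.aestronglyMeasurable.aemeasurable.ennreal_ofReal).pow_const _
  have m2 : AEMeasurable (fun t => (ENNReal.ofReal (F2 t)) ^ (1 - l)) (volume.restrict s) :=
    (h2.aestronglyMeasurable.aemeasurable.ennreal_ofReal).pow_const _
  have key := ENNReal.lintegral_mul_le_Lp_mul_Lq (volume.restrict s) hconj m1 m2
  have step1 : (∫⁻ t in s, ENNReal.ofReal (Fm t)) ≤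
      ∫⁻ t in s, ((fun t => (ENNReal.ofReal (F1 t)) ^ l) *
        (fun t => (ENNReal.ofReal (F2 t)) ^ (1 - l))) t := by
    refine lintegral_mono_ae ((ae_restrict_iff' hs).2 (ae_of_all _ fun t ht => ?_))
    have : ENNReal.ofReal (Fm t) ≤ ENNReal.ofReal (F1 t ^ l * F2 t ^ (1 - l)) :=
      ENNReal.ofReal_le_ofReal (hpt t ht)
    refine this.trans (le_of_eq ?_)
    simp only [Pi.mul_apply]
    rw [ENNReal.ofReal_mul (Real.rpow_nonneg (h1n t ht) l),
      ENNReal.ofReal_rpow_of_nonneg (h1n t ht) hl.le,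
      ENNReal.ofReal_rpow_of_nonneg (h2n t ht) (by linarith : (0:ℝ) ≤ 1 - l)]
  have simp1 : ∀ t : ℝ, ((ENNReal.ofReal (F1 t)) ^ l) ^ (1 / l) = ENNReal.ofReal (F1 t) := by
    intro t
    rw [← ENNReal.rpow_mul, mul_one_div_cancel hl.ne', ENNReal.rpow_one]
  have simp2 : ∀ t : ℝ, ((ENNReal.ofReal (F2 t)) ^ (1 - l)) ^ (1 / (1 - l)) =
      ENNReal.ofReal (F2 t) := by
    intro t
    rw [← ENNReal.rpow_mul, mul_one_div_cancel (by linarith : (1:ℝ) - l ≠ 0), ENNReal.rpow_one]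
  simp only [simp1, simp2, one_div_one_div] at key
  calc (∫⁻ t in s, ENNReal.ofReal (Fm t)) ≤ _ := step1.trans key
    _ = ENNReal.ofReal ((∫ t in s, F1 t) ^ l * (∫ t in s, F2 t) ^ (1 - l)) := by
        rw [ENNReal.ofReal_mul (Real.rpow_nonneg I1 l),
          ← ENNReal.ofReal_rpow_of_nonneg I1 hl.le,
          ← ENNReal.ofReal_rpow_of_nonneg I2 (by linarith : (0:ℝ) ≤ 1 - l), e1, e2]

lemma pt_aux {w u a b l z : ℝ} (hw : 0 ≤ w) (ha : 0 < a) (hb : 0 < b)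
    (hl : 0 < l) (hl1 : l < 1) (hz : z ≤ 0) (hu : a ^ l * b ^ (1 - l) ≤ u) :
    w * u ^ z ≤ (w * a ^ z) ^ l * (w * b ^ z) ^ (1 - l) := by
  have hl1' : (0:ℝ) < 1 - l := by linarith
  have hv : 0 < a ^ l * b ^ (1 - l) :=
    mul_pos (Real.rpow_pos_of_pos ha l) (Real.rpow_pos_of_pos hb _)
  have h1 : u ^ z ≤ (a ^ l * b ^ (1 - l)) ^ z := Real.rpow_le_rpow_of_nonpos hv hu hz
  have h2 : (a ^ l * b ^ (1 - l)) ^ z = (a ^ z) ^ l * (b ^ z) ^ (1 - l) := by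
    rw [Real.mul_rpow (Real.rpow_nonneg ha.le l) (Real.rpow_nonneg hb.le _),
      ← Real.rpow_mul ha.le, mul_comm l z, Real.rpow_mul ha.le,
      ← Real.rpow_mul hb.le, mul_comm (1 - l) z, Real.rpow_mul hb.le]
  rcases eq_or_lt_of_le hw with hw0 | hw0
  · rw [← hw0]
    simp [Real.zero_rpow hl.ne', Real.zero_rpow hl1'.ne']
  · have hwsplit : w = w ^ l * w ^ (1 - l) := by
      rw [← Real.rpow_add hw0]
      norm_num
    calc w * u ^ z ≤ w * ((a ^ z) ^ l * (b ^ z) ^ (1 - l)) := by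
          rw [← h2]; exact mul_le_mul_of_nonneg_left h1 hw
      _ = (w * a ^ z) ^ l * (w * b ^ z) ^ (1 - l) := by
          rw [Real.mul_rpow hw (Real.rpow_nonneg ha.le z),
            Real.mul_rpow hw (Real.rpow_nonneg hb.le z)]
          conv_lhs => rw [hwsplit]
          ring

theorem stmt_8 (x α β : ℝ) (G : ℝ → ℝ)
    (hG : ∀ t ∈ Ioo (0 : ℝ) 1, 0 ≤ G t) (hGint : IntegrableOn G (Ioo 0 1))
    (hx : x ∈ Ioo (0 : ℝ) 1) (hα : -1 < α) (hβ : -1 < β)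
    (hconv : ∀ A > (0 : ℝ), IntegrableOn
      (fun t => G t * x ^ α * t⁻¹ *
        (Real.log (1 / x) + A * Real.log (1 / t)) ^ (-(β + 1))) (Ioo 0 1)) :
    (∀ A₁ ∈ Ioi (0 : ℝ), ∀ A₂ ∈ Ioi (0 : ℝ), ∀ l : ℝ, 0 ≤ l → l ≤ 1 →
      (∫ t in Ioo (0 : ℝ) 1, G t * x ^ α * t⁻¹ *
          (Real.log (1 / x) + (l * A₁ + (1 - l) * A₂) * Real.log (1 / t)) ^ (-(β + 1))) ≤
        (∫ t in Ioo (0 : ℝ) 1, G t * x ^ α * t⁻¹ *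
            (Real.log (1 / x) + A₁ * Real.log (1 / t)) ^ (-(β + 1))) ^ l *
          (∫ t in Ioo (0 : ℝ) 1, G t * x ^ α * t⁻¹ *
              (Real.log (1 / x) + A₂ * Real.log (1 / t)) ^ (-(β + 1))) ^ (1 - l)) ∧
    ∀ A > (0 : ℝ),
      (∫ t in Ioo (0 : ℝ) 1, G t * x ^ α * t⁻¹ *
          (Real.log (1 / x) + (A + 1) * Real.log (1 / t)) ^ (-(β + 1))) ^ 2 ≤
        (∫ t in Ioo (0 : ℝ) 1, G t * x ^ α * t⁻¹ *
            (Real.log (1 / x) + A * Real.log (1 / t)) ^ (-(β + 1))) *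
          ∫ t in Ioo (0 : ℝ) 1, G t * x ^ α * t⁻¹ *
            (Real.log (1 / x) + (A + 2) * Real.log (1 / t)) ^ (-(β + 1)) := by
  have hc : 0 < Real.log (1 / x) := by
    rw [one_div, Real.log_inv]
    linarith [Real.log_neg hx.1 hx.2]
  have hd : ∀ t ∈ Ioo (0 : ℝ) 1, 0 < Real.log (1 / t) := fun t ht => by
    rw [one_div, Real.log_inv]
    linarith [Real.log_neg ht.1 ht.2]
  have hw : ∀ t ∈ Ioo (0 : ℝ) 1, 0 ≤ G t * x ^ α * t⁻¹ := fun t ht =>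
    mul_nonneg (mul_nonneg (hG t ht) (Real.rpow_pos_of_pos hx.1 α).le)
      (inv_nonneg.mpr ht.1.le)
  have hbase : ∀ A > (0 : ℝ), ∀ t ∈ Ioo (0 : ℝ) 1,
      0 < Real.log (1 / x) + A * Real.log (1 / t) := fun A hA t ht => by
    have := hd t ht; nlinarith
  have hnn : ∀ A > (0 : ℝ), ∀ t ∈ Ioo (0 : ℝ) 1,
      0 ≤ G t * x ^ α * t⁻¹ *
        (Real.log (1 / x) + A * Real.log (1 / t)) ^ (-(β + 1)) := fun A hA t ht =>
    mul_nonneg (hw t ht) (Real.rpow_nonneg (hbase A hA t ht).le _)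
  have hInn : ∀ A > (0 : ℝ), 0 ≤ ∫ t in Ioo (0 : ℝ) 1, G t * x ^ α * t⁻¹ *
      (Real.log (1 / x) + A * Real.log (1 / t)) ^ (-(β + 1)) := fun A hA =>
    setIntegral_nonneg measurableSet_Ioo (hnn A hA)
  have hlog : ∀ A₁ ∈ Ioi (0 : ℝ), ∀ A₂ ∈ Ioi (0 : ℝ), ∀ l : ℝ, 0 ≤ l → l ≤ 1 →
      (∫ t in Ioo (0 : ℝ) 1, G t * x ^ α * t⁻¹ *
          (Real.log (1 / x) + (l * A₁ + (1 - l) * A₂) * Real.log (1 / t)) ^ (-(β + 1))) ≤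
        (∫ t in Ioo (0 : ℝ) 1, G t * x ^ α * t⁻¹ *
            (Real.log (1 / x) + A₁ * Real.log (1 / t)) ^ (-(β + 1))) ^ l *
          (∫ t in Ioo (0 : ℝ) 1, G t * x ^ α * t⁻¹ *
              (Real.log (1 / x) + A₂ * Real.log (1 / t)) ^ (-(β + 1))) ^ (1 - l) := by
    intro A₁ hA₁ A₂ hA₂ l hl0 hl1
    rw [mem_Ioi] at hA₁ hA₂
    rcases eq_or_lt_of_le hl0 with h0 | h0
    · rw [← h0]
      norm_num
    rcases eq_or_lt_of_le hl1 with h1 | h1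
    · rw [h1]
      norm_num
    have hmid : 0 < l * A₁ + (1 - l) * A₂ := by nlinarith
    refine holder_aux measurableSet_Ioo h0 h1 (hconv A₁ hA₁) (hconv A₂ hA₂)
      (hconv _ hmid) (hnn A₁ hA₁) (hnn A₂ hA₂) (hnn _ hmid) ?_
    intro t ht
    have hgeo : (Real.log (1 / x) + A₁ * Real.log (1 / t)) ^ l *
        (Real.log (1 / x) + A₂ * Real.log (1 / t)) ^ (1 - l) ≤
        Real.log (1 / x) + (l * A₁ + (1 - l) * A₂) * Real.log (1 / t) := by
      have := Real.geom_mean_le_arith_mean2_weighted hl0 (sub_nonneg.mpr hl1)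
        (hbase A₁ hA₁ t ht).le (hbase A₂ hA₂ t ht).le (by ring)
      calc _ ≤ l * (Real.log (1 / x) + A₁ * Real.log (1 / t)) +
            (1 - l) * (Real.log (1 / x) + A₂ * Real.log (1 / t)) := this
        _ = _ := by ring
    exact pt_aux (hw t ht) (hbase A₁ hA₁ t ht) (hbase A₂ hA₂ t ht) h0 h1
      (by linarith) hgeo
  refine ⟨hlog, fun A hA => ?_⟩
  have h := hlog A (mem_Ioi.mpr hA) (A + 2) (mem_Ioi.mpr (by linarith)) (1/2)
    (by norm_num) (by norm_num)
  have e : (1/2 : ℝ) * A + (1 - 1/2) * (A + 2) = A + 1 := by ring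
  rw [e] at h
  have hsq : ∀ y : ℝ, 0 ≤ y → (y ^ ((1:ℝ)/2)) ^ 2 = y := fun y hy => by
    rw [← Real.rpow_natCast (y ^ ((1:ℝ)/2)) 2, ← Real.rpow_mul hy]
    norm_num
  have h2 := pow_le_pow_left₀ (hInn (A + 1) (by linarith)) h 2
  refine h2.trans_eq ?_
  rw [mul_pow, show (1:ℝ) - 1/2 = 1/2 by norm_num,
    hsq _ (hInn A hA), hsq _ (hInn (A + 2) (by linarith))]
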